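/- The semigroup defined by the presentation ⟨a, b | ab = ba = a^m⟩, for any m ≥ 1, is the disjoint union of the free monogenic subsemigroups ⟨a⟩ and ⟨b⟩ (both infinite and disjoint, with union the whole semigroup). -/

import Mathlib

/-- `pw a n` is `a ^ n` for `n ≥ 1` (with junk value `a` at `n = 0`),
defined in any magma. -/
def pw {S : Type*} [Mul S] (a : S) : ℕ → S
  | 0 => a
  | 1 => a
  | n + 2 => pw a (n + 1) * a

/-- The monogenic subsemigroup `⟨a⟩ = {a^n : n ≥ 1}`. -/
def genSet {S : Type*} [Mul S] (a : S) : Set S := {x | ∃ n, 1 ≤ n ∧ pw a n = x}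

/-- `a` has infinite order: its positive powers are pairwise distinct,
i.e. `⟨a⟩` is free monogenic. -/
def InfOrder {S : Type*} [Mul S] (a : S) : Prop :=
  ∀ m n : ℕ, 1 ≤ m → 1 ≤ n → pw a m = pw a n → m = n

section pwLemmas

lemma pw_one {S : Type*} [Mul S] (a : S) : pw a 1 = a := rfl

lemma pw_succ {S : Type*} [Mul S] (a : S) : ∀ {n : ℕ}, 1 ≤ n → pw a (n + 1) = pw a n * a
  | n + 1, _ => rfl

lemma pw_add {S : Type*} [Semigroup S] (a : S) :
    ∀ j k : ℕ, 1 ≤ j → 1 ≤ k → pw a j * pw a k = pw a (j + k) := by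
  intro j k hj hk
  induction k with
  | zero => omega
  | succ k ih =>
    rcases Nat.eq_zero_or_pos k with h | h
    · subst h; rw [pw_one, ← pw_succ a hj]
    · rw [pw_succ a h, ← mul_assoc, ih h, ← pw_succ a (by omega),
        show j + k + 1 = j + (k + 1) by omega]

lemma pw_eq_pow {M : Type*} [Monoid M] (x : M) : ∀ {n : ℕ}, 1 ≤ n → pw x n = x ^ n := by
  intro n hn
  induction n with
  | zero => omega
  | succ n ih =>
    rcases Nat.eq_zero_or_pos n with h | h
    · subst h; simp [pw_one]
    · rw [pw_succ x h, ih h, pow_succ]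

lemma map_pw {S T : Type*} [Mul S] [Mul T] (f : S → T)
    (hf : ∀ x y, f (x * y) = f x * f y) (a : S) :
    ∀ {n : ℕ}, 1 ≤ n → f (pw a n) = pw (f a) n := by
  intro n hn
  induction n with
  | zero => omega
  | succ n ih =>
    rcases Nat.eq_zero_or_pos n with h | h
    · subst h; rfl
    · rw [pw_succ a h, hf, ih h, ← pw_succ (f a) h]

end pwLemmas

namespace Stmt7

/-- The generator `a` in the free semigroup on two letters. -/
def A : FreeSemigroup (Fin 2) := FreeSemigroup.of 0

/-- The generator `b` in the free semigroup on two letters. -/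
def B : FreeSemigroup (Fin 2) := FreeSemigroup.of 1

/-- The relations `ab = a^m` and `ba = a^m` (i.e. `ab = ba = a^m`). -/
def rel (m : ℕ) : FreeSemigroup (Fin 2) → FreeSemigroup (Fin 2) → Prop := fun u v =>
  (u = A * B ∧ v = pw A m) ∨ (u = B * A ∧ v = pw A m)

/-- The semigroup defined by the presentation `⟨a, b | ab = ba = a^m⟩`. -/
def Sem (m : ℕ) := (conGen (rel m)).Quotient

instance (m : ℕ) : Semigroup (Sem m) :=
  inferInstanceAs (Semigroup (conGen (rel m)).Quotient)

/-- The image of `a` in the presented semigroup. -/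
def a' (m : ℕ) : Sem m := (A : (conGen (rel m)).Quotient)

/-- The image of `b` in the presented semigroup. -/
def b' (m : ℕ) : Sem m := (B : (conGen (rel m)).Quotient)

variable {m : ℕ}

/-- The relations hold in the quotient. -/
lemma hab (m : ℕ) : a' m * b' m = pw (a' m) m := by
  have : ((A * B : FreeSemigroup (Fin 2)) : (conGen (rel m)).Quotient) = ↑(pw A m) :=
    (Con.eq _).2 (ConGen.Rel.of _ _ (Or.inl ⟨rfl, rfl⟩))
  rw [Con.coe_mul] at this
  show ((A : (conGen (rel m)).Quotient) * ↑B) = _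
  rcases Nat.eq_zero_or_pos m with h | h
  · subst h
    simpa [pw, a'] using this
  · rw [this]
    exact map_pw _ (Con.coe_mul) A h

lemma hba (m : ℕ) : b' m * a' m = pw (a' m) m := by
  have : ((B * A : FreeSemigroup (Fin 2)) : (conGen (rel m)).Quotient) = ↑(pw A m) :=
    (Con.eq _).2 (ConGen.Rel.of _ _ (Or.inr ⟨rfl, rfl⟩))
  rw [Con.coe_mul] at this
  show ((B : (conGen (rel m)).Quotient) * ↑A) = _
  rcases Nat.eq_zero_or_pos m with h | h
  · subst h
    simpa [pw, a'] using this
  · rw [this]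
    exact map_pw _ (Con.coe_mul) A h

lemma pwa_mul_b (hm : 1 ≤ m) : ∀ k, 1 ≤ k → pw (a' m) k * b' m = pw (a' m) (k + m - 1) := by
  intro k hk
  induction k with
  | zero => omega
  | succ k ih =>
    rcases Nat.eq_zero_or_pos k with h | h
    · subst h
      rw [pw_one, hab]
      congr 1 <;> omega
    · rw [pw_succ _ h, mul_assoc, hab, pw_add _ k m h hm]
      congr 1 <;> omega

lemma b_mul_pwa (hm : 1 ≤ m) : ∀ k, 1 ≤ k → b' m * pw (a' m) k = pw (a' m) (m + k - 1) := by
  intro k hk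
  induction k with
  | zero => omega
  | succ k ih =>
    rcases Nat.eq_zero_or_pos k with h | h
    · subst h
      rw [pw_one, hba]
      congr 1 <;> omega
    · rw [pw_succ _ h, ← mul_assoc, ih h, ← pw_succ _ (by omega)]
      congr 1 <;> omega

lemma a_mul_pwb (hm : 1 ≤ m) : ∀ k, 1 ≤ k → ∃ j, 1 ≤ j ∧ a' m * pw (b' m) k = pw (a' m) j := by
  intro k hk
  induction k with
  | zero => omega
  | succ k ih =>
    rcases Nat.eq_zero_or_pos k with h | h
    · subst h
      exact ⟨m, hm, by rw [pw_one, hab]⟩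
    · obtain ⟨j, hj, hje⟩ := ih h
      refine ⟨j + m - 1, by omega, ?_⟩
      rw [pw_succ _ h, ← mul_assoc, hje, pwa_mul_b hm j hj]

/-- Every element is a positive power of `a'` or of `b'`. -/
lemma surj (hm : 1 ≤ m) (x : Sem m) :
    (∃ n, 1 ≤ n ∧ pw (a' m) n = x) ∨ (∃ n, 1 ≤ n ∧ pw (b' m) n = x) := by
  induction x using Con.induction_on with
  | _ w =>
    induction w using FreeSemigroup.recOnMul with
    | ih1 x =>
      fin_cases x
      · exact Or.inl ⟨1, le_refl 1, rfl⟩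
      · exact Or.inr ⟨1, le_refl 1, rfl⟩
    | ih2 x y _ ihy =>
      rw [Con.coe_mul]
      fin_cases x
      · rcases ihy with ⟨n, hn, hne⟩ | ⟨n, hn, hne⟩
        · refine Or.inl ⟨1 + n, by omega, ?_⟩
          rw [← pw_add _ 1 n le_rfl hn, pw_one, hne]; rfl
        · obtain ⟨j, hj, hje⟩ := a_mul_pwb hm n hn
          refine Or.inl ⟨j, hj, ?_⟩
          rw [← hje, hne]; rfl
      · rcases ihy with ⟨n, hn, hne⟩ | ⟨n, hn, hne⟩
        · refine Or.inl ⟨m + n - 1, by omega, ?_⟩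
          rw [← b_mul_pwa hm n hn, hne]; rfl
        · refine Or.inr ⟨1 + n, by omega, ?_⟩
          rw [← pw_add _ 1 n le_rfl hn, pw_one, hne]; rfl

/-- First invariant: count `a`s once and `b`s as `m - 1`. -/
noncomputable def phi1 (m : ℕ) : FreeSemigroup (Fin 2) →ₙ* Multiplicative ℕ :=
  FreeSemigroup.lift (fun i => Multiplicative.ofAdd (if i = 0 then 1 else m - 1))

lemma phi1_rel (hm : 1 ≤ m) {u v : FreeSemigroup (Fin 2)} (h : conGen (rel m) u v) :
    phi1 m u = phi1 m v := by
  refine (Con.conGen_le (c := Con.ker (phi1 m))).2 ?_ h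
  rintro x y (⟨rfl, rfl⟩ | ⟨rfl, rfl⟩) <;>
  · show phi1 m _ = phi1 m _
    rw [map_pw (phi1 m) (map_mul _) A hm, map_mul]
    simp only [A, B, phi1, FreeSemigroup.lift_of]
    rw [pw_eq_pow _ hm]
    simp only [← ofAdd_add, ← ofAdd_nsmul, smul_eq_mul, if_true, mul_one]
    congr 1
    rw [show (if (1 : Fin 2) = 0 then 1 else m - 1) = m - 1 from rfl]
    omega

/-- Second invariant: send `a` to `0` and count `b`s. -/
noncomputable def phi2 : FreeSemigroup (Fin 2) →ₙ* WithZero (Multiplicative ℕ) :=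
  FreeSemigroup.lift (fun i => if i = 0 then 0 else ((Multiplicative.ofAdd 1 : Multiplicative ℕ) : WithZero (Multiplicative ℕ)))

lemma phi2_rel (hm : 1 ≤ m) {u v : FreeSemigroup (Fin 2)} (h : conGen (rel m) u v) :
    phi2 u = phi2 v := by
  refine (Con.conGen_le (c := Con.ker phi2)).2 ?_ h
  rintro x y (⟨rfl, rfl⟩ | ⟨rfl, rfl⟩) <;>
  · show phi2 _ = phi2 _
    rw [map_pw phi2 (map_mul _) A hm, map_mul]
    simp only [A, B, phi2, FreeSemigroup.lift_of]
    rw [pw_eq_pow _ hm]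
    simp only [if_true, zero_mul, mul_zero, zero_pow (show m ≠ 0 by omega)]


noncomputable def psi1 (hm : 1 ≤ m) : Sem m → Multiplicative ℕ :=
  fun x => Con.liftOn x (phi1 m) fun _ _ h => phi1_rel hm h

lemma psi1_coe (hm : 1 ≤ m) (w : FreeSemigroup (Fin 2)) : psi1 hm (↑w : (conGen (rel m)).Quotient) = phi1 m w := rfl

lemma psi1_mul (hm : 1 ≤ m) (x y : Sem m) : psi1 hm (x * y) = psi1 hm x * psi1 hm y := by
  induction x using Con.induction_on with
  | _ u =>
    induction y using Con.induction_on with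
    | _ v => exact (psi1_coe hm (u * v)).trans (map_mul _ _ _)

noncomputable def psi2 (hm : 1 ≤ m) : Sem m → WithZero (Multiplicative ℕ) :=
  fun x => Con.liftOn x phi2 fun _ _ h => phi2_rel hm h

lemma psi2_coe (hm : 1 ≤ m) (w : FreeSemigroup (Fin 2)) : psi2 hm (↑w : (conGen (rel m)).Quotient) = phi2 w := rfl

lemma psi2_mul (hm : 1 ≤ m) (x y : Sem m) : psi2 hm (x * y) = psi2 hm x * psi2 hm y := by
  induction x using Con.induction_on with
  | _ u =>
    induction y using Con.induction_on with
    | _ v => exact (psi2_coe hm (u * v)).trans (map_mul _ _ _)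

lemma psi1_pw_a (hm : 1 ≤ m) {n : ℕ} (hn : 1 ≤ n) :
    psi1 hm (pw (a' m) n) = Multiplicative.ofAdd n := by
  rw [map_pw (psi1 hm) (psi1_mul hm) _ hn]
  have : psi1 hm (a' m) = Multiplicative.ofAdd 1 := by
    rw [a', psi1_coe]
    simp [phi1, A]
  rw [this, pw_eq_pow _ hn, ← ofAdd_nsmul, smul_eq_mul, mul_one]

lemma psi2_pw_a (hm : 1 ≤ m) {n : ℕ} (hn : 1 ≤ n) : psi2 hm (pw (a' m) n) = 0 := by
  rw [map_pw (psi2 hm) (psi2_mul hm) _ hn]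
  have : psi2 hm (a' m) = 0 := by
    rw [a', psi2_coe]
    simp [phi2, A]
  rw [this, pw_eq_pow _ hn, zero_pow (by omega)]

lemma psi2_pw_b (hm : 1 ≤ m) {n : ℕ} (hn : 1 ≤ n) :
    psi2 hm (pw (b' m) n) = ((Multiplicative.ofAdd n : Multiplicative ℕ) : WithZero (Multiplicative ℕ)) := by
  rw [map_pw (psi2 hm) (psi2_mul hm) _ hn]
  have : psi2 hm (b' m) = ((Multiplicative.ofAdd 1 : Multiplicative ℕ) : WithZero (Multiplicative ℕ)) := by
    rw [b', psi2_coe]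
    simp [phi2, B]
  rw [this, pw_eq_pow _ hn, ← WithZero.coe_pow, ← ofAdd_nsmul, smul_eq_mul, mul_one]


/-- The semigroup `⟨a, b | ab = ba = a^m⟩` (for `m ≥ 1`) is the disjoint union
of the free monogenic subsemigroups `⟨a⟩` and `⟨b⟩`. -/
theorem stmt_7 (m : ℕ) (hm : 1 ≤ m) :
    InfOrder (a' m) ∧ InfOrder (b' m) ∧
      genSet (a' m) ∩ genSet (b' m) = ∅ ∧
      genSet (a' m) ∪ genSet (b' m) = Set.univ := by
  refine ⟨?_, ?_, ?_, ?_⟩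
  · intro j k hj hk h
    have h2 := congrArg (psi1 hm) h
    rw [psi1_pw_a hm hj, psi1_pw_a hm hk] at h2
    exact Multiplicative.ofAdd.injective h2
  · intro j k hj hk h
    have h2 := congrArg (psi2 hm) h
    rw [psi2_pw_b hm hj, psi2_pw_b hm hk] at h2
    exact Multiplicative.ofAdd.injective (WithZero.coe_inj.mp h2)
  · ext x
    simp only [Set.mem_inter_iff, Set.mem_empty_iff_false, iff_false, not_and]
    rintro ⟨j, hj, hje⟩ ⟨k, hk, hke⟩
    have h2 := congrArg (psi2 hm) (hje.trans hke.symm)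
    rw [psi2_pw_a hm hj, psi2_pw_b hm hk] at h2
    exact WithZero.zero_ne_coe h2
  · ext x
    simp only [Set.mem_union, Set.mem_univ, iff_true]
    exact surj hm x

end Stmt7
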